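/- Assume μ is the uniform (Lebesgue) distribution on [0,1], v₀ = 1/2, and u₀ ∈ (−1/4, 0). Then the deterministic veto mechanism defined by ã*(θ) = 1/2 and p̃*(θ) = 0 for θ ∈ [1/2 − √(−u₀), 1/2 + √(−u₀)], and p̃*(θ) = 1 (with ã*(θ) arbitrary measurable) for all other θ, is optimal: it is incentive compatible (the agent's payoff is 1/2 at every state) and its principal payoff is greater than or equal to that of every incentive-compatible veto mechanism. -/

import Mathlib

open MeasureTheory Set

/-- Principal's ex ante payoff from a veto mechanism `(p, a)`:
`∫ (p θ · u₀ − (1 − p θ) · (a θ − θ)²) dμ(θ)`. -/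
noncomputable def vetoPayoff (μ : Measure ℝ) (u₀ : ℝ) (p a : ℝ → ℝ) : ℝ :=
  ∫ θ, (p θ * u₀ - (1 - p θ) * (a θ - θ) ^ 2) ∂μ

/-- A veto mechanism: a measurable veto probability `p : [0,1] → [0,1]` and a measurable
proposed action `a : [0,1] → [−M, M]`. -/
def IsVetoMechanism (M : ℝ) (p a : ℝ → ℝ) : Prop :=
  Measurable p ∧ Measurable a ∧
    (∀ θ ∈ Set.Icc (0 : ℝ) 1, p θ ∈ Set.Icc (0 : ℝ) 1) ∧
    (∀ θ ∈ Set.Icc (0 : ℝ) 1, a θ ∈ Set.Icc (-M) M)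

/-- Incentive compatibility of a veto mechanism: the agent's expected payoff
`p θ · v₀ + (1 − p θ) · a θ` is constant in the state. -/
def IsICVeto (v₀ : ℝ) (p a : ℝ → ℝ) : Prop :=
  ∃ vhat : ℝ, ∀ θ ∈ Set.Icc (0 : ℝ) 1, p θ * v₀ + (1 - p θ) * a θ = vhat

/-- An optimal veto mechanism: incentive compatible and weakly dominating every
incentive-compatible veto mechanism in principal payoff. -/
def IsOptimalVeto (μ : Measure ℝ) (v₀ u₀ M : ℝ) (p a : ℝ → ℝ) : Prop :=
  IsVetoMechanism M p a ∧ IsICVeto v₀ p a ∧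
    ∀ q b : ℝ → ℝ, IsVetoMechanism M q b → IsICVeto v₀ q b →
      vetoPayoff μ u₀ q b ≤ vetoPayoff μ u₀ p a

/-- Pointwise Lagrangian-type bound for any IC veto mechanism with agent value `c + 1/2`. -/
lemma veto_pointwise (u₀ s c θ p a : ℝ) (hs0 : 0 ≤ s) (hs : s ^ 2 = -u₀)
    (hp0 : 0 ≤ p) (hp1 : p ≤ 1)
    (hic : p * (1 / 2) + (1 - p) * a = c + 1 / 2) :
    p * u₀ - (1 - p) * (a - θ) ^ 2 ≤
      (if θ ∈ Icc (1 / 2 - s) (1 / 2 + s) then -(c + 1 / 2 - θ) ^ 2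
        else u₀ - 2 * c * (1 / 2 - θ)) := by
  have hc : c = (1 - p) * (a - 1 / 2) := by linear_combination -hic
  subst hc
  by_cases h : θ ∈ Icc (1 / 2 - s) (1 / 2 + s)
  · rw [if_pos h]
    obtain ⟨h1, h2⟩ := h
    have hd : (1 / 2 - θ) ^ 2 ≤ s ^ 2 := by nlinarith
    nlinarith [mul_nonneg hp0 (sub_nonneg.2 hd),
      mul_nonneg (mul_nonneg hp0 (by linarith : (0:ℝ) ≤ 1 - p)) (sq_nonneg (a - 1 / 2))]
  · rw [if_neg h]
    rw [mem_Icc] at h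
    push_neg at h
    have hd : s ^ 2 ≤ (1 / 2 - θ) ^ 2 := by
      rcases lt_or_ge θ (1 / 2 - s) with h' | h'
      · nlinarith
      · have := h h'
        nlinarith
    nlinarith [mul_nonneg (by linarith : (0:ℝ) ≤ 1 - p) (sub_nonneg.2 hd),
      mul_nonneg (by linarith : (0:ℝ) ≤ 1 - p) (sq_nonneg (a - 1 / 2))]

/-- Integral of a quadratic polynomial over an interval. -/
lemma poly_int (a b P Q R : ℝ) :
    ∫ θ in a..b, (P + Q * θ + R * θ ^ 2) =
      P * (b - a) + Q * (b ^ 2 - a ^ 2) / 2 + R * (b ^ 3 - a ^ 3) / 3 := by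
  have h0 : IntervalIntegrable (fun _ : ℝ => P) volume a b := intervalIntegrable_const
  have h1 : IntervalIntegrable (fun θ : ℝ => Q * θ) volume a b :=
    (continuous_const.mul continuous_id).intervalIntegrable _ _
  have h2 : IntervalIntegrable (fun θ : ℝ => R * θ ^ 2) volume a b :=
    (continuous_const.mul (continuous_pow 2)).intervalIntegrable _ _
  rw [intervalIntegral.integral_add (h0.add h1) h2, intervalIntegral.integral_add h0 h1,
    intervalIntegral.integral_const, intervalIntegral.integral_const_mul,
    intervalIntegral.integral_const_mul, integral_id, integral_pow]
  push_cast
  simp only [smul_eq_mul]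
  ring

lemma icc_int (a b : ℝ) (hab : a ≤ b) (f : ℝ → ℝ) :
    ∫ θ in Icc a b, f θ = ∫ θ in a..b, f θ := by
  rw [intervalIntegral.integral_of_le hab, integral_Icc_eq_integral_Ioc]

/-- Splitting an integral of a piecewise function over a subset. -/
lemma split_int {T S : Set ℝ} (hT : MeasurableSet T) (hTS : T ⊆ S)
    (A B : ℝ → ℝ) (hAB : IntegrableOn (fun θ => A θ - B θ) T volume)
    (hB : IntegrableOn B S volume) :
    ∫ θ in S, (T.indicator (fun θ => A θ - B θ) θ + B θ) =
      (∫ θ in T, (A θ - B θ)) + ∫ θ in S, B θ := by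
  have hind : Integrable (T.indicator fun θ => A θ - B θ) (volume.restrict S) :=
    ((integrable_indicator_iff hT).2 hAB).restrict
  rw [integral_add hind hB, setIntegral_indicator hT, inter_eq_self_of_subset_right hTS]

/-- Bounded measurable functions are integrable on finite-measure sets. -/
lemma bdd_int {f : ℝ → ℝ} (hf : Measurable f) {C : ℝ} {S : Set ℝ} (hS : MeasurableSet S)
    (hSfin : volume S < ⊤) (hC : ∀ θ ∈ S, |f θ| ≤ C) : IntegrableOn f S volume := by
  apply Integrable.mono' (integrableOn_const hSfin.ne) hf.aestronglyMeasurable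
  filter_upwards [ae_restrict_mem hS] with θ hθ
  simpa [Real.norm_eq_abs] using hC θ hθ

set_option maxHeartbeats 1000000 in
/-- **A deterministic optimal mechanism for `v₀ = 1/2`.** With the uniform prior on `[0,1]`,
`v₀ = 1/2` and `u₀ ∈ (−1/4, 0)`, the deterministic veto mechanism that chooses `1/2` with no
veto on `[1/2 − √(−u₀), 1/2 + √(−u₀)]` and vetoes with probability one elsewhere (with the
proposed action arbitrary measurable there) is optimal; it is incentive compatible with agent
payoff `1/2` at every state. -/
theorem deterministic_optimal_mechanism
    (μ : Measure ℝ) (hμ : μ = volume.restrict (Icc (0 : ℝ) 1))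
    (M u₀ : ℝ) (hM : 1 < M) (hu₀ : u₀ ∈ Ioo (-(1 / 4) : ℝ) 0)
    (pf : ℝ → ℝ)
    (hpf : ∀ θ, pf θ =
      if θ ∈ Icc (1 / 2 - Real.sqrt (-u₀)) (1 / 2 + Real.sqrt (-u₀)) then 0 else 1)
    (af : ℝ → ℝ) (hafm : Measurable af)
    (hafr : ∀ θ ∈ Icc (0 : ℝ) 1, af θ ∈ Icc (-M) M)
    (hafc : ∀ θ ∈ Icc (1 / 2 - Real.sqrt (-u₀)) (1 / 2 + Real.sqrt (-u₀)), af θ = 1 / 2) :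
    (∀ θ ∈ Icc (0 : ℝ) 1, pf θ * (1 / 2) + (1 - pf θ) * af θ = 1 / 2) ∧
      IsOptimalVeto μ (1 / 2) u₀ M pf af := by
  subst hμ
  obtain ⟨hu1, hu2⟩ := hu₀
  set s : ℝ := Real.sqrt (-u₀) with hs_def
  have hs0 : 0 ≤ s := Real.sqrt_nonneg _
  have hs2 : s ^ 2 = -u₀ := Real.sq_sqrt (by linarith)
  have hspos : 0 < s := Real.sqrt_pos.2 (by linarith)
  have hshalf : s < 1 / 2 := (Real.sqrt_lt' (by norm_num)).2 (by norm_num; linarith)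
  set I : Set ℝ := Icc (1 / 2 - s) (1 / 2 + s) with hI_def
  have hIle : (1 / 2 : ℝ) - s ≤ 1 / 2 + s := by linarith
  have hIsub : I ⊆ Icc (0 : ℝ) 1 := by
    intro θ hθ
    obtain ⟨h1, h2⟩ := hθ
    exact ⟨by linarith, by linarith⟩
  have h01 : (0 : ℝ) ≤ 1 := by norm_num
  -- incentive compatibility
  have hIC : ∀ θ ∈ Icc (0 : ℝ) 1, pf θ * (1 / 2) + (1 - pf θ) * af θ = 1 / 2 := by
    intro θ _
    rw [hpf θ]
    by_cases h : θ ∈ I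
    · rw [if_pos h, hafc θ h]; ring
    · rw [if_neg h]; ring
  refine ⟨hIC, ?_, ⟨1 / 2, hIC⟩, ?_⟩
  · -- IsVetoMechanism
    refine ⟨?_, hafm, ?_, hafr⟩
    · have : pf = fun θ => if θ ∈ I then (0 : ℝ) else 1 := funext hpf
      rw [this]
      exact Measurable.ite measurableSet_Icc measurable_const measurable_const
    · intro θ _
      rw [hpf θ]
      split <;> norm_num
  -- optimality
  intro q b hqv hICq
  obtain ⟨hqm, hbm, hqr, hbr⟩ := hqv
  obtain ⟨vhat, hicq⟩ := hICq
  set c : ℝ := vhat - 1 / 2 with hc_def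
  -- the payoff of the proposed mechanism
  have hfstar : ∀ θ, pf θ * u₀ - (1 - pf θ) * (af θ - θ) ^ 2
      = if θ ∈ I then -(1 / 2 - θ) ^ 2 else u₀ := by
    intro θ
    by_cases h : θ ∈ I
    · rw [if_pos h, hpf θ, if_pos h, hafc θ h]; ring
    · rw [if_neg h, hpf θ, if_neg h]; ring
  have hAc : Continuous fun θ : ℝ => (-(1 / 2 - θ) ^ 2) - u₀ := by fun_prop
  have i1 : ∫ θ in I, ((-(1 / 2 - θ) ^ 2) - u₀) = -2 * s * u₀ - 2 * s ^ 3 / 3 := by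
    rw [hI_def, icc_int _ _ hIle,
      intervalIntegral.integral_congr
        (g := fun θ : ℝ => (-1 / 4 - u₀) + 1 * θ + (-1) * θ ^ 2) (fun θ _ => by ring),
      poly_int]
    ring
  have hPstar : vetoPayoff (volume.restrict (Icc (0 : ℝ) 1)) u₀ pf af
      = u₀ - 2 * s * u₀ - 2 * s ^ 3 / 3 := by
    have e1 : vetoPayoff (volume.restrict (Icc (0 : ℝ) 1)) u₀ pf af
        = ∫ θ in Icc (0 : ℝ) 1,
            (I.indicator (fun θ => (-(1 / 2 - θ) ^ 2) - u₀) θ + u₀) := by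
      refine integral_congr_ae (Filter.Eventually.of_forall fun θ => ?_)
      show pf θ * u₀ - (1 - pf θ) * (af θ - θ) ^ 2
          = I.indicator (fun θ => (-(1 / 2 - θ) ^ 2) - u₀) θ + u₀
      by_cases h : θ ∈ I
      · rw [hfstar θ, if_pos h, Set.indicator_of_mem h]; ring
      · rw [hfstar θ, if_neg h, Set.indicator_of_notMem h]; ring
    have i2 : (∫ (_ : ℝ) in Icc (0 : ℝ) 1, u₀) = u₀ := by
      rw [icc_int _ _ h01, intervalIntegral.integral_const]
      simp
    rw [e1, split_int measurableSet_Icc hIsub _ _ hAc.integrableOn_Icc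
        (integrableOn_const measure_Icc_lt_top.ne), i1, i2]
    ring
  -- pointwise domination for the candidate mechanism
  set G : ℝ → ℝ := fun θ =>
    if θ ∈ I then -(c + 1 / 2 - θ) ^ 2 else u₀ - 2 * c * (1 / 2 - θ) with hG_def
  have hfG : ∀ θ ∈ Icc (0 : ℝ) 1,
      q θ * u₀ - (1 - q θ) * (b θ - θ) ^ 2 ≤ G θ := by
    intro θ hθ
    exact veto_pointwise u₀ s c θ (q θ) (b θ) hs0 hs2 (hqr θ hθ).1 (hqr θ hθ).2
      (by linarith [hicq θ hθ])
  -- integrability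
  have hABc : Continuous fun θ : ℝ => (-(c + 1 / 2 - θ) ^ 2) - (u₀ - 2 * c * (1 / 2 - θ)) := by
    fun_prop
  have hBc : Continuous fun θ : ℝ => u₀ - 2 * c * (1 / 2 - θ) := by fun_prop
  have hABint : IntegrableOn
      (fun θ => (-(c + 1 / 2 - θ) ^ 2) - (u₀ - 2 * c * (1 / 2 - θ))) I volume :=
    hABc.integrableOn_Icc
  have hBint : IntegrableOn (fun θ : ℝ => u₀ - 2 * c * (1 / 2 - θ)) (Icc (0 : ℝ) 1) volume :=
    hBc.integrableOn_Icc
  have hGeq : G = fun θ =>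
      I.indicator (fun θ => (-(c + 1 / 2 - θ) ^ 2) - (u₀ - 2 * c * (1 / 2 - θ))) θ
        + (u₀ - 2 * c * (1 / 2 - θ)) := by
    funext θ
    by_cases h : θ ∈ I <;> simp [hG_def, h]
  have hGint : IntegrableOn G (Icc (0 : ℝ) 1) volume := by
    rw [hGeq]
    exact (((integrable_indicator_iff measurableSet_Icc).2 hABint).restrict).add hBint
  have hfint : IntegrableOn (fun θ => q θ * u₀ - (1 - q θ) * (b θ - θ) ^ 2)
      (Icc (0 : ℝ) 1) volume := by
    refine bdd_int ?_ measurableSet_Icc measure_Icc_lt_top (C := -u₀ + (M + 1) ^ 2) ?_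
    · exact (hqm.mul_const u₀).sub
        ((measurable_const.sub hqm).mul ((hbm.sub measurable_id).pow_const 2))
    · intro θ hθ
      obtain ⟨hq0, hq1⟩ := hqr θ hθ
      obtain ⟨hb1, hb2⟩ := hbr θ hθ
      obtain ⟨ht0, ht1⟩ := hθ
      have h1 : (b θ - θ) ^ 2 ≤ (M + 1) ^ 2 := by nlinarith
      have h2 : (1 - q θ) * (b θ - θ) ^ 2 ≤ (M + 1) ^ 2 := by
        nlinarith [mul_nonneg hq0 (sq_nonneg (b θ - θ))]
      rw [abs_le]
      constructor
      · nlinarith [mul_nonneg (by linarith : (0:ℝ) ≤ 1 - q θ) (by linarith : (0:ℝ) ≤ -u₀)]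
      · nlinarith [mul_nonneg (sub_nonneg.2 hq1) (sq_nonneg (b θ - θ)),
          mul_nonneg hq0 (by linarith : (0:ℝ) ≤ -u₀)]
  -- compute the integral of G
  have i3 : ∫ θ in I, ((-(c + 1 / 2 - θ) ^ 2) - (u₀ - 2 * c * (1 / 2 - θ)))
      = -2 * s * c ^ 2 - 2 * s * u₀ - 2 * s ^ 3 / 3 := by
    rw [hI_def, icc_int _ _ hIle,
      intervalIntegral.integral_congr
        (g := fun θ : ℝ => (-c ^ 2 - 1 / 4 - u₀) + 1 * θ + (-1) * θ ^ 2) (fun θ _ => by ring),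
      poly_int]
    ring
  have i4 : ∫ θ in Icc (0 : ℝ) 1, (u₀ - 2 * c * (1 / 2 - θ)) = u₀ := by
    rw [icc_int _ _ h01,
      intervalIntegral.integral_congr
        (g := fun θ : ℝ => (u₀ - c) + (2 * c) * θ + 0 * θ ^ 2) (fun θ _ => by ring),
      poly_int]
    ring
  have hGval : ∫ θ in Icc (0 : ℝ) 1, G θ
      = u₀ - 2 * s * u₀ - 2 * s ^ 3 / 3 - 2 * s * c ^ 2 := by
    have e2 : ∫ θ in Icc (0 : ℝ) 1, G θ
        = ∫ θ in Icc (0 : ℝ) 1,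
            (I.indicator (fun θ => (-(c + 1 / 2 - θ) ^ 2) - (u₀ - 2 * c * (1 / 2 - θ))) θ
              + (u₀ - 2 * c * (1 / 2 - θ))) := by
      refine integral_congr_ae (Filter.Eventually.of_forall fun θ => ?_)
      show G θ = I.indicator
          (fun θ => (-(c + 1 / 2 - θ) ^ 2) - (u₀ - 2 * c * (1 / 2 - θ))) θ
          + (u₀ - 2 * c * (1 / 2 - θ))
      rw [hGeq]
    rw [e2, split_int measurableSet_Icc hIsub _ _ hABint hBint, i3, i4]
    ring
  calc vetoPayoff (volume.restrict (Icc (0 : ℝ) 1)) u₀ q b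
      = ∫ θ in Icc (0 : ℝ) 1, (q θ * u₀ - (1 - q θ) * (b θ - θ) ^ 2) := rfl
    _ ≤ ∫ θ in Icc (0 : ℝ) 1, G θ :=
        setIntegral_mono_on hfint hGint measurableSet_Icc hfG
    _ = u₀ - 2 * s * u₀ - 2 * s ^ 3 / 3 - 2 * s * c ^ 2 := hGval
    _ ≤ u₀ - 2 * s * u₀ - 2 * s ^ 3 / 3 := by nlinarith [sq_nonneg c]
    _ = vetoPayoff (volume.restrict (Icc (0 : ℝ) 1)) u₀ pf af := hPstar.symm
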